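/- For every natural number n ≥ 0, the number of straight ménage permutations in S_n (permutations π of {1,...,n} with π(i) ≠ i and π(i) ≠ i+1 for all i) equals ∑_{k=0}^{n} (-1)^k · C(2n-k, k) · (n-k)!. -/

import Mathlib

open Finset

/-- A straight ménage permutation of `{1,...,n}` (modeled on `Fin n`):
`π i ≠ i` and `π i ≠ i + 1` for all `i`. -/
def IsStraightMenage {n : ℕ} (π : Equiv.Perm (Fin n)) : Prop :=
  ∀ i : Fin n, π i ≠ i ∧ (π i : ℕ) ≠ (i : ℕ) + 1

instance {n : ℕ} (π : Equiv.Perm (Fin n)) : Decidable (IsStraightMenage π) := by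
  unfold IsStraightMenage; infer_instance

def menBoard (n : ℕ) : Finset (Fin n × Fin n) :=
  univ.filter fun c => (c.2 : ℕ) = (c.1 : ℕ) ∨ (c.2 : ℕ) = (c.1 : ℕ) + 1

def menNA {n : ℕ} (S : Finset (Fin n × Fin n)) : Prop :=
  ∀ c ∈ S, ∀ c' ∈ S, c ≠ c' → c.1 ≠ c'.1 ∧ c.2 ≠ c'.2

instance {n : ℕ} (S : Finset (Fin n × Fin n)) : Decidable (menNA S) := by
  unfold menNA; infer_instance

lemma mem_menBoard {n : ℕ} {c : Fin n × Fin n} :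
    c ∈ menBoard n ↔ ((c.2 : ℕ) = (c.1 : ℕ) ∨ (c.2 : ℕ) = (c.1 : ℕ) + 1) := by
  simp [menBoard]

lemma ncCount (m : ℕ) : ∀ k : ℕ,
    (((range m).powerset.filter fun T => T.card = k ∧ ∀ a ∈ T, a + 1 ∉ T).card)
      = (m + 1 - k).choose k := by
  induction m using Nat.strong_induction_on with
  | _ m ih =>
  match m with
  | 0 =>
    intro k
    rcases k with _ | k <;>
      simp [range_zero, powerset_empty, filter_singleton, Nat.choose]
  | 1 =>
    intro k
    have : (range 1).powerset = {∅, {0}} := by decide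
    rw [this]
    rcases k with _ | _ | k
    · simp [filter_insert, filter_singleton]
    · have : ({∅, {0}} : Finset (Finset ℕ)).filter
          (fun T => T.card = 0 + 1 ∧ ∀ a ∈ T, a + 1 ∉ T) = {{0}} := by decide
      rw [this]
      decide
    · rw [show (1 + 1 - (k+2)) = 0 by omega, Nat.choose_eq_zero_of_lt (by omega)]
      rw [show ({∅, {0}} : Finset (Finset ℕ)).filter
        (fun T => T.card = k + 2 ∧ ∀ a ∈ T, a + 1 ∉ T) = ∅ from ?_]
      · simp
      · ext T
        simp only [mem_filter, mem_insert, mem_singleton, notMem_empty, iff_false]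
        rintro ⟨hT | hT, hc, _⟩ <;> subst hT <;> simp at hc <;> omega
  | (j+2) =>
    intro k
    have h1 := ih (j+1) (by omega) k
    set F := ((range (j+2)).powerset.filter fun T => T.card = k ∧ ∀ a ∈ T, a + 1 ∉ T) with hF
    have hsplit : (F.filter fun T => (j+1) ∈ T).card
        + (F.filter fun T => ¬ (j+1) ∈ T).card = F.card :=
      card_filter_add_card_filter_not _
    have e1 : (F.filter fun T => ¬ (j+1) ∈ T)
        = ((range (j+1)).powerset.filter fun T => T.card = k ∧ ∀ a ∈ T, a + 1 ∉ T) := by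
      ext T
      simp only [hF, mem_filter, mem_powerset, and_assoc]
      constructor
      · rintro ⟨hs, hc, hp, hn⟩
        refine ⟨fun a ha => ?_, hc, hp⟩
        have h2 := hs ha
        simp only [mem_range] at h2 ⊢
        have : a ≠ j + 1 := fun h => hn (h ▸ ha)
        omega
      · rintro ⟨hs, hc, hp⟩
        refine ⟨fun a ha => ?_, hc, hp, fun hn => ?_⟩
        · have := hs ha; simp only [mem_range] at *; omega
        · have := hs hn; simp at this
    rcases k with _ | k
    · -- k = 0
      have e0 : (F.filter fun T => (j+1) ∈ T) = ∅ := by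
        ext T
        simp only [hF, mem_filter, mem_powerset, notMem_empty, iff_false]
        rintro ⟨⟨_, hc, _⟩, hmem⟩
        rw [card_eq_zero] at hc
        subst hc; simp at hmem
      rw [← hsplit, e0, e1, h1]
      simp
    · -- k = k'+1
      have h0 := ih j (by omega) k
      have e2 : (F.filter fun T => (j+1) ∈ T).card
          = ((range j).powerset.filter fun T => T.card = k ∧ ∀ a ∈ T, a + 1 ∉ T).card := by
        apply card_nbij' (fun T => T.erase (j+1)) (fun T => insert (j+1) T)
        · rintro T hT
          simp only [hF, mem_coe, mem_filter, mem_powerset] at hT ⊢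
          obtain ⟨⟨hs, hc, hp⟩, hmem⟩ := hT
          have hjne : j ∉ T := fun hj => hp j hj hmem
          refine ⟨fun a ha => ?_, ?_, fun a ha => ?_⟩
          · rw [mem_erase] at ha
            have := hs ha.2
            simp only [mem_range] at this ⊢
            have : a ≠ j := fun h => hjne (h ▸ ha.2)
            omega
          · rw [card_erase_of_mem hmem, hc]
            omega
          · rw [mem_erase] at ha
            intro hcon
            rw [mem_erase] at hcon
            exact hp a ha.2 hcon.2
        · rintro T hT
          simp only [hF, mem_coe, mem_filter, mem_powerset] at hT ⊢
          obtain ⟨hs, hc, hp⟩ := hT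
          have hjn : (j+1) ∉ T := fun h => by have := hs h; simp only [mem_range] at this; omega
          refine ⟨⟨fun a ha => ?_, ?_, fun a ha hcon => ?_⟩, mem_insert_self _ _⟩
          · rw [mem_insert] at ha
            rcases ha with rfl | ha
            · simp
            · have := hs ha; simp only [mem_range] at this ⊢; omega
          · rw [card_insert_of_notMem hjn, hc]
          · rw [mem_insert] at ha hcon
            rcases ha with rfl | ha
            · rcases hcon with h | h
              · omega
              · have := hs h; simp only [mem_range] at this; omega
            · rcases hcon with h | h
              · have := hs ha; simp only [mem_range] at this; omega
              · exact hp a ha h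
        · rintro T hT
          simp only [hF, mem_coe, mem_filter] at hT
          exact insert_erase hT.2
        · rintro T hT
          simp only [mem_coe, mem_filter, mem_powerset] at hT
          apply erase_insert
          intro h
          have := hT.1 h; simp only [mem_range] at this; omega
      rw [← hsplit, e1, e2, h1, h0]
      show (j+1-k).choose k + (j+2-(k+1)).choose (k+1) = (j+3-(k+1)).choose (k+1)
      rcases le_or_gt k (j+1) with hk | hk
      · rw [show j+2-(k+1) = j+1-k by omega, show j+3-(k+1) = (j+1-k)+1 by omega,
          Nat.choose_succ_succ]
      · rw [show j+1-k = 0 by omega, show j+2-(k+1) = 0 by omega, show j+3-(k+1) = 0 by omega,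
          Nat.choose_eq_zero_of_lt (by omega), Nat.choose_eq_zero_of_lt (by omega)]

lemma menNA_card_le {n : ℕ} {S : Finset (Fin n × Fin n)} (h : menNA S) : S.card ≤ n := by
  have hinj : Set.InjOn Prod.fst (S : Set (Fin n × Fin n)) := by
    intro c hc c' hc' hcc
    by_contra hne
    exact (h c hc c' hc' hne).1 hcc
  calc S.card = (S.image Prod.fst).card := (Finset.card_image_of_injOn hinj).symm
    _ ≤ Fintype.card (Fin n) := Finset.card_le_univ _
    _ = n := Fintype.card_fin n

lemma extCount0 {n : ℕ} (S : Finset (Fin n × Fin n)) (h : ¬ menNA S) :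
    (univ.filter fun π : Equiv.Perm (Fin n) => ∀ c ∈ S, π c.1 = c.2).card = 0 := by
  rw [Finset.card_eq_zero, Finset.eq_empty_iff_forall_notMem]
  intro π hπ
  rw [Finset.mem_filter] at hπ
  apply h
  intro c hc c' hc' hne
  have h1 := hπ.2 c hc
  have h2 := hπ.2 c' hc'
  constructor
  · intro heq
    apply hne
    have : c.2 = c'.2 := by rw [← h1, ← h2, heq]
    exact Prod.ext heq this
  · intro heq
    apply hne
    have : π c.1 = π c'.1 := by rw [h1, h2, heq]
    exact Prod.ext (π.injective this) heq

lemma extCount {n : ℕ} (S : Finset (Fin n × Fin n)) (h : menNA S) :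
    (univ.filter fun π : Equiv.Perm (Fin n) => ∀ c ∈ S, π c.1 = c.2).card
      = (n - S.card).factorial := by
  classical
  have hfst : Set.InjOn Prod.fst (S : Set (Fin n × Fin n)) := by
    intro c hc c' hc' hcc
    by_contra hne
    exact (h c hc c' hc' hne).1 hcc
  have hsnd : Set.InjOn Prod.snd (S : Set (Fin n × Fin n)) := by
    intro c hc c' hc' hcc
    by_contra hne
    exact (h c hc c' hc' hne).2 hcc
  set A : Finset (Fin n) := S.image Prod.fst with hA
  set B : Finset (Fin n) := S.image Prod.snd with hB
  have hex : ∀ x ∈ A, ∃! c, c ∈ S ∧ c.1 = x := by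
    intro x hx
    rw [hA, Finset.mem_image] at hx
    obtain ⟨c, hc, hcx⟩ := hx
    exact ⟨c, ⟨hc, hcx⟩, fun c' ⟨hc', hcx'⟩ => hfst hc' hc (by rw [hcx, hcx'])⟩
  have hcardA : A.card = S.card := Finset.card_image_of_injOn hfst
  have hcardB : B.card = S.card := Finset.card_image_of_injOn hsnd
  -- the equivalence between A and B induced by S
  let f : {x // x ∈ (↑A : Set (Fin n))} → {y // y ∈ (↑B : Set (Fin n))} := fun x =>
    ⟨(S.choose (fun c => c.1 = x.1) (hex x.1 x.2)).2, by
      rw [hB]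
      simp only [Finset.coe_image, Set.mem_image, Finset.mem_coe]
      exact ⟨_, S.choose_mem _ _, rfl⟩⟩
  have hchoose : ∀ (x : Fin n) (hx : x ∈ A), (S.choose (fun c => c.1 = x) (hex x hx)) ∈ S ∧
      (S.choose (fun c => c.1 = x) (hex x hx)).1 = x :=
    fun x hx => ⟨S.choose_mem _ _, S.choose_property (fun c => c.1 = x) _⟩
  have hf : Function.Bijective f := by
    constructor
    · rintro ⟨x, hx⟩ ⟨x', hx'⟩ hxy
      obtain ⟨hm, he⟩ := hchoose x hx
      obtain ⟨hm', he'⟩ := hchoose x' hx'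
      have : (S.choose (fun c => c.1 = x) (hex x hx)) = (S.choose (fun c => c.1 = x') (hex x' hx')) := by
        apply hsnd hm hm'
        exact congrArg Subtype.val hxy
      apply Subtype.ext
      show x = x'
      have h2 : (S.choose (fun c => c.1 = x) (hex x hx)).1
          = (S.choose (fun c => c.1 = x') (hex x' hx')).1 := by rw [this]
      exact he.symm.trans (h2.trans he')
    · rintro ⟨y, hy⟩
      rw [hB] at hy
      simp only [Finset.coe_image, Set.mem_image, Finset.mem_coe] at hy
      obtain ⟨c, hc, hcy⟩ := hy
      have hc1 : c.1 ∈ A := by rw [hA]; exact Finset.mem_image_of_mem _ hc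
      refine ⟨⟨c.1, hc1⟩, ?_⟩
      obtain ⟨hm, he⟩ := hchoose c.1 hc1
      have : (S.choose (fun c' => c'.1 = c.1) (hex c.1 hc1)) = c := hfst hm hc he
      apply Subtype.ext
      show (S.choose (fun c' => c'.1 = c.1) (hex c.1 hc1)).2 = y
      rw [this, hcy]
  let e₀ : {x // x ∈ (↑A : Set (Fin n))} ≃ {y // y ∈ (↑B : Set (Fin n))} := Equiv.ofBijective f hf
  -- property equivalence
  have hPQ : ∀ π : Equiv.Perm (Fin n),
      (∀ c ∈ S, π c.1 = c.2) ↔ (∀ x : {x // x ∈ (↑A : Set (Fin n))}, π x = (e₀ x : Fin n)) := by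
    intro π
    constructor
    · rintro hP ⟨x, hx⟩
      obtain ⟨hm, he⟩ := hchoose x hx
      have := hP _ hm
      rw [he] at this
      exact this
    · intro hQ c hc
      have hc1 : c.1 ∈ A := by rw [hA]; exact Finset.mem_image_of_mem _ hc
      have := hQ ⟨c.1, hc1⟩
      obtain ⟨hm, he⟩ := hchoose c.1 hc1
      have hcc : (S.choose (fun c' => c'.1 = c.1) (hex c.1 hc1)) = c := hfst hm hc he
      rw [this]
      show (S.choose (fun c' => c'.1 = c.1) (hex c.1 hc1)).2 = c.2
      rw [hcc]
  -- cardinality chain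
  rw [← Fintype.card_subtype]
  rw [Fintype.card_congr (Equiv.subtypeEquivRight hPQ)]
  rw [Fintype.card_congr (Equiv.Set.compl e₀)]
  have hcompl : Fintype.card ((↑A : Set (Fin n))ᶜ : Set (Fin n)) = n - S.card := by
    rw [Fintype.card_compl_set]
    simp [hcardA]
  have hcompl' : Fintype.card ((↑B : Set (Fin n))ᶜ : Set (Fin n)) = n - S.card := by
    rw [Fintype.card_compl_set]
    simp [hcardB]
  rw [Fintype.card_equiv (Fintype.equivOfCardEq (by rw [hcompl, hcompl'])), hcompl]

lemma label_lt {n : ℕ} {c : Fin n × Fin n} (hc : c ∈ menBoard n) :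
    (c.1 : ℕ) + (c.2 : ℕ) < 2 * n - 1 := by
  rw [mem_menBoard] at hc
  have h1 := c.1.isLt
  have h2 := c.2.isLt
  omega

lemma label_inj {n : ℕ} {c c' : Fin n × Fin n} (hc : c ∈ menBoard n) (hc' : c' ∈ menBoard n)
    (h : (c.1 : ℕ) + (c.2 : ℕ) = (c'.1 : ℕ) + (c'.2 : ℕ)) : c = c' := by
  rw [mem_menBoard] at hc hc'
  have e1 : (c.1 : ℕ) = (c'.1 : ℕ) := by omega
  have e2 : (c.2 : ℕ) = (c'.2 : ℕ) := by omega
  exact Prod.ext (Fin.ext e1) (Fin.ext e2)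

lemma label_adj {n : ℕ} {c c' : Fin n × Fin n} (hc : c ∈ menBoard n) (hc' : c' ∈ menBoard n) :
    (c ≠ c' ∧ (c.1 = c'.1 ∨ c.2 = c'.2)) ↔
      ((c.1 : ℕ) + (c.2 : ℕ) + 1 = (c'.1 : ℕ) + (c'.2 : ℕ) ∨
       (c'.1 : ℕ) + (c'.2 : ℕ) + 1 = (c.1 : ℕ) + (c.2 : ℕ)) := by
  rw [mem_menBoard] at hc hc'
  have hne : c ≠ c' ↔ ¬((c.1 : ℕ) = (c'.1 : ℕ) ∧ (c.2 : ℕ) = (c'.2 : ℕ)) := by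
    simp [Ne, Prod.ext_iff, Fin.ext_iff]
  have h1 : c.1 = c'.1 ↔ (c.1 : ℕ) = (c'.1 : ℕ) := Fin.ext_iff
  have h2 : c.2 = c'.2 ↔ (c.2 : ℕ) = (c'.2 : ℕ) := Fin.ext_iff
  rw [hne, h1, h2]
  omega

instance {n : ℕ} (S : Finset (Fin n × Fin n)) : Decidable (menNA S) := by
  unfold menNA; infer_instance

lemma boardCount (n k : ℕ) :
    (((menBoard n).powerset.filter fun S => S.card = k ∧ menNA S).card)
      = (2 * n - k).choose k := by
  classical
  have key : (((menBoard n).powerset.filter fun S => S.card = k ∧ menNA S).card)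
      = (((range (2*n-1)).powerset.filter fun T => T.card = k ∧ ∀ a ∈ T, a + 1 ∉ T).card) := by
    apply card_nbij'
      (fun S : Finset (Fin n × Fin n) => S.image (fun c => (c.1 : ℕ) + (c.2 : ℕ)))
      (fun T : Finset ℕ => (menBoard n).filter (fun c => (c.1 : ℕ) + (c.2 : ℕ) ∈ T))
    · -- forward maps to
      rintro S hS
      rw [mem_coe, mem_filter, mem_powerset] at hS ⊢
      obtain ⟨hsub, hcard, hna⟩ := hS
      refine ⟨?_, ?_, ?_⟩
      · intro a ha
        rw [Finset.mem_image] at ha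
        obtain ⟨c, hc, rfl⟩ := ha
        rw [mem_range]
        exact label_lt (hsub hc)
      · rw [Finset.card_image_of_injOn, hcard]
        intro c hc c' hc' hl
        exact label_inj (hsub hc) (hsub hc') hl
      · intro a ha hcon
        rw [Finset.mem_image] at ha hcon
        obtain ⟨c, hc, hc2⟩ := ha
        obtain ⟨c', hc', hc2'⟩ := hcon
        have hadj : (c ≠ c' ∧ (c.1 = c'.1 ∨ c.2 = c'.2)) := by
          rw [label_adj (hsub hc) (hsub hc')]
          omega
        have hd := hna c hc c' hc' hadj.1
        rcases hadj.2 with h | h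
        · exact hd.1 h
        · exact hd.2 h
    · -- backward maps to
      rintro T hT
      rw [mem_coe, mem_filter, mem_powerset] at hT ⊢
      obtain ⟨hsub, hcard, hnc⟩ := hT
      have himg : ((menBoard n).filter (fun c => (c.1 : ℕ) + (c.2 : ℕ) ∈ T)).image
          (fun c => (c.1 : ℕ) + (c.2 : ℕ)) = T := by
        ext a
        simp only [Finset.mem_image, mem_filter]
        constructor
        · rintro ⟨c, ⟨_, hc⟩, rfl⟩; exact hc
        · intro ha
          have har : a < 2*n - 1 := by have := hsub ha; rwa [mem_range] at this
          have hn : 1 ≤ n := by omega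
          refine ⟨(⟨a/2, by omega⟩, ⟨(a+1)/2, by omega⟩), ⟨?_, ?_⟩, ?_⟩
          · rw [mem_menBoard]; simp only; omega
          · simp only
            have : a/2 + (a+1)/2 = a := by omega
            rwa [this]
          · simp only
            omega
      refine ⟨filter_subset _ _, ?_, ?_⟩
      · have hinj : Set.InjOn (fun c : Fin n × Fin n => (c.1 : ℕ) + (c.2 : ℕ))
            ↑((menBoard n).filter (fun c => (c.1 : ℕ) + (c.2 : ℕ) ∈ T)) := by
          intro c hc c' hc' hl
          rw [mem_coe, mem_filter] at hc hc'
          exact label_inj hc.1 hc'.1 hl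
        have h4 := Finset.card_image_of_injOn hinj
        rw [himg] at h4
        beta_reduce
        omega
      · intro c hc c' hc' hne
        rw [mem_filter] at hc hc'
        by_contra hcon
        rw [not_and_or, not_ne_iff, not_ne_iff] at hcon
        have hadj := (label_adj hc.1 hc'.1).mp ⟨hne, hcon⟩
        rcases hadj with h | h
        · exact hnc _ hc.2 (h ▸ hc'.2)
        · exact hnc _ hc'.2 (h ▸ hc.2)
    · -- left inverse
      rintro S hS
      rw [mem_coe, mem_filter, mem_powerset] at hS
      obtain ⟨hsub, _, _⟩ := hS
      ext c
      simp only [mem_filter, Finset.mem_image]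
      constructor
      · rintro ⟨hcb, c', hc', hl⟩
        rwa [label_inj hcb (hsub hc') hl.symm]
      · intro hc
        exact ⟨hsub hc, c, hc, rfl⟩
    · -- right inverse
      rintro T hT
      rw [mem_coe, mem_filter, mem_powerset] at hT
      obtain ⟨hsub, hcard, hnc⟩ := hT
      ext a
      simp only [Finset.mem_image, mem_filter]
      constructor
      · rintro ⟨c, ⟨_, hc⟩, rfl⟩; exact hc
      · intro ha
        have har : a < 2*n - 1 := by have := hsub ha; rwa [mem_range] at this
        refine ⟨(⟨a/2, by omega⟩, ⟨(a+1)/2, by omega⟩), ⟨?_, ?_⟩, ?_⟩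
        · rw [mem_menBoard]; simp only; omega
        · simp only
          have : a/2 + (a+1)/2 = a := by omega
          rwa [this]
        · simp only
          omega
  rw [key, ncCount]
  rcases n with _ | n
  · rcases k with _ | k
    · rfl
    · rw [Nat.choose_eq_zero_of_lt (by omega), Nat.choose_eq_zero_of_lt (by omega)]
  · have he : 2*(n+1)-1+1-k = 2*(n+1)-k := by omega
    rw [he]

theorem straight_menage_count (n : ℕ) :
    ((Finset.univ.filter fun π : Equiv.Perm (Fin n) => IsStraightMenage π).card : ℤ) =
      ∑ k ∈ Finset.range (n + 1),
        (-1 : ℤ) ^ k * (Nat.choose (2 * n - k) k : ℤ) * ((n - k).factorial : ℤ) := by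
  classical
  have hmen : ∀ π : Equiv.Perm (Fin n), IsStraightMenage π ↔
      ((menBoard n).filter fun c => π c.1 = c.2) = ∅ := by
    intro π
    rw [Finset.filter_eq_empty_iff]
    constructor
    · intro h c hc hcon
      rw [mem_menBoard] at hc
      rcases hc with hc | hc
      · exact (h c.1).1 (by rw [hcon]; exact Fin.ext hc)
      · exact (h c.1).2 (by rw [hcon, hc])
    · intro h i
      constructor
      · intro hcon
        exact h (mem_menBoard.mpr (Or.inl rfl) : (i, i) ∈ menBoard n) hcon
      · intro hcon
        exact h (mem_menBoard.mpr (Or.inr hcon) : (i, π i) ∈ menBoard n) rfl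
  have step1 : ((Finset.univ.filter fun π : Equiv.Perm (Fin n) => IsStraightMenage π).card : ℤ)
      = ∑ S ∈ (menBoard n).powerset, (-1 : ℤ) ^ S.card *
          ((univ.filter fun π : Equiv.Perm (Fin n) => ∀ c ∈ S, π c.1 = c.2).card : ℤ) := by
    rw [Finset.card_filter]
    push_cast
    calc ∑ π : Equiv.Perm (Fin n), (if IsStraightMenage π then (1 : ℤ) else 0)
        = ∑ π : Equiv.Perm (Fin n),
            ∑ S ∈ ((menBoard n).filter fun c => π c.1 = c.2).powerset, (-1 : ℤ) ^ S.card := by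
          apply Finset.sum_congr rfl
          intro π _
          rw [sum_powerset_neg_one_pow_card]
          by_cases hπ : IsStraightMenage π
          · rw [if_pos hπ, if_pos ((hmen π).mp hπ)]
          · rw [if_neg hπ, if_neg (fun h => hπ ((hmen π).mpr h))]
      _ = ∑ π : Equiv.Perm (Fin n), ∑ S ∈ (menBoard n).powerset,
            (if (∀ c ∈ S, π c.1 = c.2) then (-1 : ℤ) ^ S.card else 0) := by
          apply Finset.sum_congr rfl
          intro π _
          have hps : ((menBoard n).filter fun c => π c.1 = c.2).powerset
              = (menBoard n).powerset.filter (fun S => ∀ c ∈ S, π c.1 = c.2) := by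
            ext S
            simp only [mem_powerset, mem_filter]
            constructor
            · intro hsub
              exact ⟨fun c hc => (mem_filter.mp (hsub hc)).1,
                fun c hc => (mem_filter.mp (hsub hc)).2⟩
            · rintro ⟨hsub, hp⟩ c hc
              exact mem_filter.mpr ⟨hsub hc, hp c hc⟩
          rw [hps, Finset.sum_filter]
      _ = ∑ S ∈ (menBoard n).powerset, ∑ π : Equiv.Perm (Fin n),
            (if (∀ c ∈ S, π c.1 = c.2) then (-1 : ℤ) ^ S.card else 0) := Finset.sum_comm
      _ = _ := by
          apply Finset.sum_congr rfl
          intro S _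
          rw [← Finset.sum_filter, Finset.sum_const, nsmul_eq_mul]
          ring
  rw [step1]
  have step2 : ∑ S ∈ (menBoard n).powerset, (-1 : ℤ) ^ S.card *
          ((univ.filter fun π : Equiv.Perm (Fin n) => ∀ c ∈ S, π c.1 = c.2).card : ℤ)
      = ∑ S ∈ (menBoard n).powerset.filter menNA,
          (-1 : ℤ) ^ S.card * ((n - S.card).factorial : ℤ) := by
    rw [Finset.sum_filter]
    apply Finset.sum_congr rfl
    intro S _
    by_cases hS : menNA S
    · rw [if_pos hS, extCount S hS]
    · rw [if_neg hS, extCount0 S hS]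
      simp
  rw [step2]
  have step3 : ∑ S ∈ (menBoard n).powerset.filter menNA,
          (-1 : ℤ) ^ S.card * ((n - S.card).factorial : ℤ)
      = ∑ k ∈ Finset.range (n + 1), ∑ S ∈ ((menBoard n).powerset.filter menNA).filter
          (fun S => S.card = k), (-1 : ℤ) ^ S.card * ((n - S.card).factorial : ℤ) := by
    rw [Finset.sum_fiberwise_of_maps_to]
    intro S hS
    rw [mem_filter] at hS
    rw [mem_range]
    have := menNA_card_le hS.2
    omega
  rw [step3]
  apply Finset.sum_congr rfl
  intro k hk
  have hfib : ((menBoard n).powerset.filter menNA).filter (fun S => S.card = k)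
      = (menBoard n).powerset.filter (fun S => S.card = k ∧ menNA S) := by
    rw [Finset.filter_filter]
    apply Finset.filter_congr
    intro S _
    tauto
  have hconst : ∑ S ∈ ((menBoard n).powerset.filter menNA).filter (fun S => S.card = k),
        (-1 : ℤ) ^ S.card * ((n - S.card).factorial : ℤ)
      = ∑ _S ∈ (menBoard n).powerset.filter (fun S => S.card = k ∧ menNA S),
        (-1 : ℤ) ^ k * ((n - k).factorial : ℤ) :=
    Finset.sum_congr hfib (fun S hS => by
      rw [mem_filter] at hS
      rw [hS.2.1])
  rw [hconst, Finset.sum_const, boardCount, nsmul_eq_mul]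
  ring
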